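/- Let β ≥ 1 and let μ₃ : [0,T] → ℝ be continuous with μ₃(t) > 0 on (0,T] and such that the limit M = lim_{t→0⁺} μ₃(t)/t^{(β+1)/2} exists and is positive. Let ψ : [0,T] → ℝ be continuous with ψ(t) > 0 on [0,T]. Define H(t) = √π · μ₃(t) / (√(β+1) · t^β · ∫₀ᵗ ψ(τ)/√(t^{β+1} − τ^{β+1}) dτ) for t ∈ (0,T]. Then lim_{t→0⁺} H(t) = √π · M / (√(β+1) · ψ(0) · I₁), where I₁ = ∫₀¹ dz/√(1 − z^{β+1}). -/

import Mathlib

set_option maxHeartbeats 1000000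

open MeasureTheory Set Real Filter

theorem stmt_7 (β T : ℝ) (hβ : 1 ≤ β) (hT : 0 < T)
    (μ₃ : ℝ → ℝ) (hμ₃c : ContinuousOn μ₃ (Set.Icc 0 T))
    (hμ₃pos : ∀ t ∈ Set.Ioc (0:ℝ) T, 0 < μ₃ t)
    (M : ℝ) (hM : 0 < M)
    (hMlim : Tendsto (fun t => μ₃ t / t ^ ((β + 1) / 2)) (nhdsWithin 0 (Set.Ioi 0)) (nhds M))
    (ψ : ℝ → ℝ) (hψc : ContinuousOn ψ (Set.Icc 0 T))
    (hψpos : ∀ t ∈ Set.Icc (0:ℝ) T, 0 < ψ t)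
    (H : ℝ → ℝ)
    (hH : ∀ t ∈ Set.Ioc (0:ℝ) T,
      H t = Real.sqrt π * μ₃ t /
        (Real.sqrt (β + 1) * t ^ β *
          ∫ τ in (0:ℝ)..t, ψ τ / Real.sqrt (t ^ (β + 1) - τ ^ (β + 1))))
    (I₁ : ℝ) (hI₁ : I₁ = ∫ z in (0:ℝ)..1, 1 / Real.sqrt (1 - z ^ (β + 1))) :
    Tendsto H (nhdsWithin 0 (Set.Ioi 0))
      (nhds (Real.sqrt π * M / (Real.sqrt (β + 1) * ψ 0 * I₁))) := by
  have hβ1 : (0:ℝ) < β + 1 := by linarith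
  set p : ℝ := (β + 1) / 2 with hp
  set A : ℝ → ℝ := fun t => ∫ z in (0:ℝ)..1, ψ (t * z) / Real.sqrt (1 - z ^ (β + 1)) with hA
  -- continuity facts
  have hcont : Continuous fun z : ℝ => z ^ (β + 1) := Real.continuous_rpow_const hβ1.le
  have hcontw : Continuous fun z : ℝ => Real.sqrt (1 - z ^ (β + 1)) :=
    Real.continuous_sqrt.comp (continuous_const.sub hcont)
  have hzle : ∀ z ∈ Ioc (0:ℝ) 1, z ^ (β + 1) ≤ z := by
    intro z hz
    calc z ^ (β + 1) ≤ z ^ (1:ℝ) :=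
          Real.rpow_le_rpow_of_exponent_ge hz.1 hz.2 (by linarith)
      _ = z := Real.rpow_one z
  -- integrable dominating functions
  have hdom : ∀ C : ℝ, IntervalIntegrable
      (fun z => C / Real.sqrt (1 - z ^ (β + 1))) volume 0 1 := by
    intro C
    have h0 := ((intervalIntegral.intervalIntegrable_rpow' (r := -(1/2)) (a := 0) (b := 1)
      (by norm_num)).comp_sub_left 1)
    have hbi : IntervalIntegrable (fun z : ℝ => |C| * (1 - z) ^ (-(1/2) : ℝ)) volume 0 1 := by
      simpa using (h0.const_mul |C|).symm
    refine hbi.mono_fun' ((measurable_const.div hcontw.measurable).aestronglyMeasurable) ?_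
    rw [Set.uIoc_of_le (zero_le_one)]
    refine (ae_restrict_iff' measurableSet_Ioc).2 (ae_of_all _ fun z hz => ?_)
    rcases eq_or_lt_of_le hz.2 with h1 | h1
    · rw [h1]
      simp [Real.zero_rpow (by norm_num : (-(1/2):ℝ) ≠ 0)]
    · have hz1 : (0:ℝ) < 1 - z := by linarith
      have hle : Real.sqrt (1 - z) ≤ Real.sqrt (1 - z ^ (β + 1)) :=
        Real.sqrt_le_sqrt (by linarith [hzle z hz])
      have hsp : (0:ℝ) < Real.sqrt (1 - z) := Real.sqrt_pos.2 hz1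
      have hr : (1 - z) ^ (-(1/2) : ℝ) = (Real.sqrt (1 - z))⁻¹ := by
        rw [Real.rpow_neg hz1.le, Real.sqrt_eq_rpow]
      show ‖C / Real.sqrt (1 - z ^ (β + 1))‖ ≤ |C| * (1 - z) ^ (-(1/2) : ℝ)
      rw [Real.norm_eq_abs, abs_div, abs_of_nonneg (Real.sqrt_nonneg _), hr,
        ← div_eq_mul_inv]
      exact div_le_div_of_nonneg_left (abs_nonneg C) hsp hle
  -- positivity of I₁
  have hI₁pos : 0 < I₁ := by
    rw [hI₁]
    apply intervalIntegral.intervalIntegral_pos_of_pos_on (hdom 1) ?_ zero_lt_one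
    intro x hx
    have hx1 : x ^ (β + 1) < 1 := lt_of_le_of_lt (hzle x ⟨hx.1, hx.2.le⟩) hx.2
    exact div_pos one_pos (Real.sqrt_pos.2 (by linarith))
  -- bound for ψ
  obtain ⟨C, hC⟩ := (isCompact_Icc (a := (0:ℝ)) (b := T)).exists_bound_of_continuousOn hψc
  -- dominated convergence
  have hmeas : ∀ᶠ t in nhdsWithin (0:ℝ) (Set.Ioi 0), AEStronglyMeasurable
      (fun z : ℝ => ψ (t * z) / Real.sqrt (1 - z ^ (β + 1)))
      (volume.restrict (Set.uIoc (0:ℝ) 1)) := by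
    filter_upwards [Ioc_mem_nhdsGT hT] with t ht
    have hψm : ContinuousOn (fun z : ℝ => ψ (t * z)) (Set.uIoc (0:ℝ) 1) := by
      rw [Set.uIoc_of_le (zero_le_one)]
      refine ContinuousOn.comp hψc
        ((continuous_const.mul continuous_id).continuousOn) fun z hz => ?_
      exact ⟨mul_nonneg ht.1.le hz.1.le,
        le_trans (mul_le_of_le_one_right ht.1.le hz.2) ht.2⟩
    simp only [div_eq_mul_inv]
    exact (hψm.aestronglyMeasurable measurableSet_uIoc).mul
      ((hcontw.measurable.inv).aestronglyMeasurable.restrict)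
  have hbnd : ∀ᶠ t in nhdsWithin (0:ℝ) (Set.Ioi 0), ∀ᵐ z : ℝ, z ∈ Set.uIoc (0:ℝ) 1 →
      ‖ψ (t * z) / Real.sqrt (1 - z ^ (β + 1))‖ ≤ C / Real.sqrt (1 - z ^ (β + 1)) := by
    filter_upwards [Ioc_mem_nhdsGT hT] with t ht
    refine ae_of_all _ fun z hz => ?_
    rw [Set.uIoc_of_le (zero_le_one)] at hz
    have htz : t * z ∈ Set.Icc (0:ℝ) T :=
      ⟨mul_nonneg ht.1.le hz.1.le,
        le_trans (mul_le_of_le_one_right ht.1.le hz.2) ht.2⟩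
    have hCz := hC (t * z) htz
    rw [Real.norm_eq_abs] at hCz
    rw [Real.norm_eq_abs, abs_div, abs_of_nonneg (Real.sqrt_nonneg _), div_eq_mul_inv,
      div_eq_mul_inv]
    exact mul_le_mul_of_nonneg_right hCz (inv_nonneg.2 (Real.sqrt_nonneg _))
  have hlim : ∀ᵐ z : ℝ, z ∈ Set.uIoc (0:ℝ) 1 →
      Tendsto (fun t => ψ (t * z) / Real.sqrt (1 - z ^ (β + 1)))
        (nhdsWithin 0 (Set.Ioi 0)) (nhds (ψ 0 / Real.sqrt (1 - z ^ (β + 1)))) := by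
    have hne1 : ∀ᵐ z : ℝ, z ≠ (1:ℝ) := by
      rw [ae_iff]
      have he : {z : ℝ | ¬z ≠ 1} = {1} := by ext x; simp
      rw [he]
      exact measure_singleton 1
    filter_upwards [hne1] with z hz1 hz
    rw [Set.uIoc_of_le (zero_le_one)] at hz
    have hψ0 : ContinuousWithinAt ψ (Set.Icc 0 T) 0 := hψc 0 ⟨le_refl 0, hT.le⟩
    have hmul : Tendsto (fun t : ℝ => t * z) (nhdsWithin 0 (Set.Ioi 0))
        (nhdsWithin 0 (Set.Icc 0 T)) := by
      apply tendsto_nhdsWithin_of_tendsto_nhds_of_eventually_within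
      · have h2 : Tendsto (fun t : ℝ => t * z) (nhds 0) (nhds 0) := by
          have h3 : Tendsto (fun t : ℝ => t * z) (nhds 0) (nhds (0 * z)) :=
            (continuous_id.mul continuous_const).tendsto (0:ℝ)
          rwa [zero_mul] at h3
        exact h2.mono_left nhdsWithin_le_nhds
      · filter_upwards [Ioc_mem_nhdsGT hT] with t ht
        exact ⟨mul_nonneg ht.1.le hz.1.le,
          le_trans (mul_le_of_le_one_right ht.1.le hz.2) ht.2⟩
    exact (hψ0.tendsto.comp hmul).div_const _
  have hDCT : Tendsto (fun t => ∫ z in (0:ℝ)..1, ψ (t * z) / Real.sqrt (1 - z ^ (β + 1)))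
      (nhdsWithin 0 (Set.Ioi 0))
      (nhds (∫ z in (0:ℝ)..1, ψ 0 / Real.sqrt (1 - z ^ (β + 1)))) :=
    intervalIntegral.tendsto_integral_filter_of_dominated_convergence
      (fun z => C / Real.sqrt (1 - z ^ (β + 1))) hmeas hbnd (hdom C) hlim
  have hval : (∫ z in (0:ℝ)..1, ψ 0 / Real.sqrt (1 - z ^ (β + 1))) = ψ 0 * I₁ := by
    rw [hI₁, ← intervalIntegral.integral_const_mul]
    apply intervalIntegral.integral_congr
    intro z _
    exact (mul_one_div _ _).symm
  rw [hval] at hDCT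
  have hψ0pos : 0 < ψ 0 := hψpos 0 ⟨le_refl 0, hT.le⟩
  -- identify H with the rescaled expression
  have hHeq : ∀ t ∈ Set.Ioc (0:ℝ) T,
      H t = Real.sqrt π * (μ₃ t / t ^ p) / (Real.sqrt (β + 1) * A t) := by
    intro t ht
    have ht0 : 0 < t := ht.1
    have htp : (0:ℝ) < t ^ p := Real.rpow_pos_of_pos ht0 _
    have hint : (∫ τ in (0:ℝ)..t, ψ τ / Real.sqrt (t ^ (β + 1) - τ ^ (β + 1)))
        = t * (A t / t ^ p) := by
      have h1 : t * (∫ z in (0:ℝ)..1,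
          ψ (t * z) / Real.sqrt (t ^ (β + 1) - (t * z) ^ (β + 1)))
          = ∫ τ in (0:ℝ)..t, ψ τ / Real.sqrt (t ^ (β + 1) - τ ^ (β + 1)) := by
        rw [intervalIntegral.integral_comp_mul_left
          (fun τ => ψ τ / Real.sqrt (t ^ (β + 1) - τ ^ (β + 1))) ht0.ne',
          smul_eq_mul, ← mul_assoc, mul_inv_cancel₀ ht0.ne', one_mul, mul_zero, mul_one]
      rw [← h1]
      congr 1
      have h2 : (∫ z in (0:ℝ)..1,
          ψ (t * z) / Real.sqrt (t ^ (β + 1) - (t * z) ^ (β + 1)))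
          = ∫ z in (0:ℝ)..1, (ψ (t * z) / Real.sqrt (1 - z ^ (β + 1))) / t ^ p := by
        apply intervalIntegral.integral_congr
        intro z hz
        rw [Set.uIcc_of_le (zero_le_one)] at hz
        have hfac : t ^ (β + 1) - (t * z) ^ (β + 1)
            = t ^ (β + 1) * (1 - z ^ (β + 1)) := by
          rw [Real.mul_rpow ht0.le hz.1]; ring
        have hsq : Real.sqrt (t ^ (β + 1)) = t ^ p := by
          rw [Real.sqrt_eq_rpow, ← Real.rpow_mul ht0.le]
          congr 1
          rw [hp]; ring
        show ψ (t * z) / Real.sqrt (t ^ (β + 1) - (t * z) ^ (β + 1))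
            = ψ (t * z) / Real.sqrt (1 - z ^ (β + 1)) / t ^ p
        rw [hfac, Real.sqrt_mul (Real.rpow_nonneg ht0.le _), hsq, div_div, mul_comm (t ^ p)]
      rw [h2, intervalIntegral.integral_div]
    rw [hH t ht, hint]
    have hpow : t ^ β * (t * (A t / t ^ p)) = t ^ p * A t := by
      have htβ1 : t ^ β * t = t ^ (β + 1) := by
        rw [Real.rpow_add ht0, Real.rpow_one]
      have h2p : t ^ p * t ^ p = t ^ (β + 1) := by
        rw [← Real.rpow_add ht0]
        congr 1
        rw [hp]; ring
      have key : t ^ β * t = t ^ p * t ^ p := by rw [htβ1, ← h2p]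
      field_simp
      linear_combination A t * key
    have hden : Real.sqrt (β + 1) * t ^ β * (t * (A t / t ^ p))
        = t ^ p * (Real.sqrt (β + 1) * A t) := by
      rw [mul_assoc, hpow]; ring
    rw [hden, ← div_div, mul_div_assoc]
  have hne : Real.sqrt (β + 1) * (ψ 0 * I₁) ≠ 0 :=
    (mul_pos (Real.sqrt_pos.2 hβ1) (mul_pos hψ0pos hI₁pos)).ne'
  have main : Tendsto (fun t => Real.sqrt π * (μ₃ t / t ^ p) / (Real.sqrt (β + 1) * A t))
      (nhdsWithin 0 (Set.Ioi 0))
      (nhds (Real.sqrt π * M / (Real.sqrt (β + 1) * (ψ 0 * I₁)))) :=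
    (tendsto_const_nhds.mul hMlim).div (tendsto_const_nhds.mul hDCT) hne
  rw [mul_assoc]
  apply main.congr'
  filter_upwards [Ioc_mem_nhdsGT hT] with t ht
  exact (hHeq t ht).symm
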